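/- Suppose the EDM completion problem is feasible with some realization in ℝ^r, and suppose that no realization of G in ℝ^l for any l > r spans ℝ^l. Then every solution X of the convex relaxation {X ∈ S^n_{c,+} : X_{ii}+X_{jj}−2X_{ij} = d_{ij} for all ij ∈ E} has rank at most r. -/

import Mathlib

open Matrix BigOperators

/-- Points `x` realize the weighted graph `(E, d)` in `ℝ^l`. -/
def Realizes {n l : ℕ} (E : Set (Fin n × Fin n)) (d : Fin n → Fin n → ℝ)
    (x : Fin n → Fin l → ℝ) : Prop :=
  ∀ p ∈ E, ∑ k, (x p.1 k - x p.2 k) ^ 2 = d p.1 p.2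

lemma sumsq_eq_normsq {m : ℕ} (y : EuclideanSpace ℝ (Fin m)) :
    ∑ k, (y k) ^ 2 = ‖y‖ ^ 2 := by
  rw [EuclideanSpace.norm_eq, Real.sq_sqrt (by positivity)]
  simp [sq_abs]

theorem relaxation_exact {n r : ℕ}
    (E : Set (Fin n × Fin n)) (d : Fin n → Fin n → ℝ)
    (hfeas : ∃ x : Fin n → Fin r → ℝ, Realizes E d x)
    (hspan : ∀ l : ℕ, r < l → ∀ x : Fin n → Fin l → ℝ, Realizes E d x →
      Submodule.span ℝ (Set.range x) ≠ ⊤) :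
    ∀ X : Matrix (Fin n) (Fin n) ℝ, X.PosSemidef →
      X.mulVec (fun _ => (1 : ℝ)) = 0 →
      (∀ p ∈ E, X p.1 p.1 + X p.2 p.2 - 2 * X p.1 p.2 = d p.1 p.2) →
      X.rank ≤ r := by
  intro X hX _hXe hcon
  by_contra h
  push_neg at h
  set S : Matrix (Fin n) (Fin n) ℝ := (open scoped MatrixOrder in CFC.sqrt X) with hSdef
  have hSS : S * S = X := by open scoped MatrixOrder in exact CFC.sqrt_mul_sqrt_self X hX.nonneg
  have hSherm : S.IsHermitian := (open scoped MatrixOrder in (CFC.sqrt_nonneg X).posSemidef).isHermitian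
  have hSsym : ∀ i j, S i j = S j i := by
    intro i j
    conv_lhs => rw [← hSherm.eq]
    simp [Matrix.conjTranspose_apply]
  have hrank : S.rank = X.rank := by
    conv_rhs => rw [← hSS]
    rw [← Matrix.rank_conjTranspose_mul_self S]
    congr 1
    rw [hSherm.eq]
  -- rows of S as vectors in Euclidean space
  set v : Fin n → EuclideanSpace ℝ (Fin n) := fun i => WithLp.toLp 2 (S i) with hv
  set W : Submodule ℝ (EuclideanSpace ℝ (Fin n)) := Submodule.span ℝ (Set.range v) with hW
  have hdim : Module.finrank ℝ W = X.rank := by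
    rw [← hrank, Matrix.rank_eq_finrank_span_row]
    have hWm : W = (Submodule.span ℝ (Set.range S.row)).map
        (WithLp.linearEquiv 2 ℝ (Fin n → ℝ)).symm.toLinearMap := by
      rw [Submodule.map_span, ← Set.range_comp]; rfl
    rw [hWm]
    exact LinearEquiv.finrank_map_eq _ _
  have hrlt : r < Module.finrank ℝ W := by rw [hdim]; exact h
  -- orthonormal basis of W
  set b := stdOrthonormalBasis ℝ W with hb
  set v' : Fin n → W := fun i => ⟨v i, Submodule.subset_span (Set.mem_range_self i)⟩ with hv'
  set x : Fin n → Fin (Module.finrank ℝ W) → ℝ := fun i => b.repr (v' i) with hx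
  have hreal : Realizes E d x := by
    intro p hp
    have h1 : ∑ k, (x p.1 k - x p.2 k) ^ 2
        = ‖(b.repr (v' p.1) - b.repr (v' p.2) : EuclideanSpace ℝ (Fin (Module.finrank ℝ W)))‖ ^ 2 := by
      rw [← sumsq_eq_normsq]
      rfl
    rw [h1, ← map_sub, b.repr.norm_map, ← hcon p hp]
    have h2 : ((v' p.1 - v' p.2 : W) : EuclideanSpace ℝ (Fin n))
        = v p.1 - v p.2 := rfl
    have h3 : ‖v' p.1 - v' p.2‖ = ‖v p.1 - v p.2‖ := by
      rw [← h2, Submodule.norm_coe]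
    rw [h3, ← sumsq_eq_normsq]
    have hXii : ∀ i j : Fin n, X i j = ∑ k, S i k * S j k := by
      intro i j
      rw [← hSS, Matrix.mul_apply]
      exact Finset.sum_congr rfl fun k _ => by rw [hSsym j k]
    have : ∀ k, ((v p.1 - v p.2) k) = S p.1 k - S p.2 k := fun k => rfl
    simp_rw [this, hXii, sub_sq]
    rw [show (2:ℝ) * ∑ k, S p.1 k * S p.2 k = ∑ k, 2 * (S p.1 k * S p.2 k) from
      Finset.mul_sum _ _ _, ← Finset.sum_add_distrib, ← Finset.sum_sub_distrib]
    exact Finset.sum_congr rfl fun k _ => by ring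
  -- the span of x is everything
  have hspanv' : Submodule.span ℝ (Set.range v') = ⊤ := by
    apply Submodule.map_injective_of_injective (Submodule.injective_subtype W)
    rw [Submodule.map_span, Submodule.map_top, Submodule.range_subtype]
    have : W.subtype '' Set.range v' = Set.range v := by
      ext y; constructor
      · rintro ⟨w, ⟨i, rfl⟩, rfl⟩; exact ⟨i, rfl⟩
      · rintro ⟨i, rfl⟩; exact ⟨v' i, ⟨i, rfl⟩, rfl⟩
    rw [this, hW]
  have hxtop : Submodule.span ℝ (Set.range x)
      = (⊤ : Submodule ℝ (Fin (Module.finrank ℝ W) → ℝ)) := by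
    have : Set.range x = ⇑(b.repr.toLinearEquiv.trans (WithLp.linearEquiv 2 ℝ (Fin (Module.finrank ℝ W) → ℝ))).toLinearMap '' Set.range v' := by
      ext y; constructor
      · rintro ⟨i, rfl⟩; exact ⟨v' i, ⟨i, rfl⟩, rfl⟩
      · rintro ⟨w, ⟨i, rfl⟩, rfl⟩; exact ⟨i, rfl⟩
    rw [this, ← Submodule.map_span (b.repr.toLinearEquiv.trans (WithLp.linearEquiv 2 ℝ (Fin (Module.finrank ℝ W) → ℝ))).toLinearMap, hspanv',
      Submodule.map_top]
    exact LinearMap.range_eq_top.2 (b.repr.toLinearEquiv.trans (WithLp.linearEquiv 2 ℝ (Fin (Module.finrank ℝ W) → ℝ))).surjective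
  exact hspan (Module.finrank ℝ W) hrlt x hreal hxtop
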